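/- arXiv:2302.11898 — 12 statements merged into one kernel-verified Lean document; each statement's English description precedes it below -/
import Mathlib

section
/- Let x : ℝ → E be a GDAM trajectory, i.e. x has derivative x'(t) = s_ζ(x(t)) at every t in an interval I, where ∇f(x(t)) ≠ 0 and ∇g(x(t)) ≠ 0 on I. Then for every t ∈ I the composite t ↦ f(x(t)) is differentiable with derivative (d/dt) f(x(t)) = −‖∇f(x(t))‖ · (1 + ζ · cos θ(x(t))). -/
open RealInnerProductSpace

/-- Along a GDAM trajectory, the objective satisfies
`(d/dt) f(x(t)) = -‖∇f(x(t))‖ (1 + ζ cos θ(x(t)))`. -/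
theorem gdam_deriv_f {n : ℕ}
    (f g : EuclideanSpace ℝ (Fin n) → ℝ)
    (hf : ContDiff ℝ 2 f) (hg : ContDiff ℝ 2 g)
    (ζ : ℝ) (hζ : ζ ∈ Set.Ico (0 : ℝ) 1)
    (x : ℝ → EuclideanSpace ℝ (Fin n)) (I : Set ℝ)
    (hgf : ∀ t ∈ I, gradient f (x t) ≠ 0)
    (hgg : ∀ t ∈ I, gradient g (x t) ≠ 0)
    (hx : ∀ t ∈ I, HasDerivAt x
      (-(‖gradient f (x t)‖⁻¹ • gradient f (x t))
        - ζ • (‖gradient g (x t)‖⁻¹ • gradient g (x t))) t) :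
    ∀ t ∈ I, HasDerivAt (fun t => f (x t))
      (-‖gradient f (x t)‖ *
        (1 + ζ * (⟪gradient f (x t), gradient g (x t)⟫ /
          (‖gradient f (x t)‖ * ‖gradient g (x t)‖)))) t := by
  intro t ht
  have hd : DifferentiableAt ℝ f (x t) :=
    (hf.differentiable two_ne_zero).differentiableAt
  have h := hd.hasGradientAt.hasFDerivAt.comp_hasDerivAt t (hx t ht)
  convert h using 1
  · rfl
  · rfl
  · rfl
  have hnf : ‖gradient f (x t)‖ ≠ 0 := norm_ne_zero_iff.mpr (hgf t ht)
  have hng : ‖gradient g (x t)‖ ≠ 0 := norm_ne_zero_iff.mpr (hgg t ht)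
  simp only [InnerProductSpace.toDual_apply_apply, inner_sub_right, inner_neg_right,
    inner_smul_right, real_inner_self_eq_norm_sq]
  field_simp
  ring
end

section
/- (Boundedness lemma.) Let ζ ∈ [0,1) and let x : ℝ → E be a GDAM trajectory on [0,T), i.e. x'(t) = s_ζ(x(t)) with ∇f(x(t)) ≠ 0 and ∇g(x(t)) ≠ 0 for all t ∈ [0,T). Then t ↦ f(x(t)) is monotone nonincreasing on [0,T); in particular f(x(t)) ≤ f(x(0)) for all t ∈ [0,T), so the trajectory remains in the sublevel set B = {y : f(y) ≤ f(x(0))}. -/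
open RealInnerProductSpace

/-- Boundedness lemma: along a GDAM trajectory on `[0,T)`, the
objective `t ↦ f(x(t))` is nonincreasing; in particular the trajectory stays
in the sublevel set `{y : f y ≤ f (x 0)}`. -/
theorem gdam_boundedness {n : ℕ}
    (f g : EuclideanSpace ℝ (Fin n) → ℝ)
    (hf : ContDiff ℝ 2 f) (hg : ContDiff ℝ 2 g)
    (ζ : ℝ) (hζ : ζ ∈ Set.Ico (0 : ℝ) 1)
    (T : ℝ) (x : ℝ → EuclideanSpace ℝ (Fin n))
    (hgf : ∀ t ∈ Set.Ico (0 : ℝ) T, gradient f (x t) ≠ 0)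
    (hgg : ∀ t ∈ Set.Ico (0 : ℝ) T, gradient g (x t) ≠ 0)
    (hx : ∀ t ∈ Set.Ico (0 : ℝ) T, HasDerivAt x
      (-(‖gradient f (x t)‖⁻¹ • gradient f (x t))
        - ζ • (‖gradient g (x t)‖⁻¹ • gradient g (x t))) t) :
    AntitoneOn (fun t => f (x t)) (Set.Ico (0 : ℝ) T) ∧
      ∀ t ∈ Set.Ico (0 : ℝ) T, x t ∈ {y | f y ≤ f (x 0)} := by
  have hfd : Differentiable ℝ f := hf.differentiable (by norm_num)
  -- derivative of f ∘ x at points of Ico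
  have key : ∀ t ∈ Set.Ico (0 : ℝ) T,
      HasDerivAt (fun t => f (x t))
        (⟪gradient f (x t), (-(‖gradient f (x t)‖⁻¹ • gradient f (x t))
          - ζ • (‖gradient g (x t)‖⁻¹ • gradient g (x t)))⟫) t := by
    intro t ht
    have hgrad := (hfd (x t)).hasGradientAt
    have := hgrad.hasFDerivAt.comp_hasDerivAt t (hx t ht)
    simp at this ⊢; exact this
  have hder_nonpos : ∀ t ∈ Set.Ico (0 : ℝ) T,
      ⟪gradient f (x t), (-(‖gradient f (x t)‖⁻¹ • gradient f (x t))
        - ζ • (‖gradient g (x t)‖⁻¹ • gradient g (x t)))⟫ ≤ 0 := by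
    intro t ht
    set u := gradient f (x t)
    set w := gradient g (x t)
    have hu : ‖u‖ > 0 := norm_pos_iff.mpr (hgf t ht)
    have hw : ‖w‖ > 0 := norm_pos_iff.mpr (hgg t ht)
    have expand : ⟪u, (-(‖u‖⁻¹ • u) - ζ • (‖w‖⁻¹ • w))⟫
        = -(‖u‖⁻¹ * ⟪u, u⟫) - ζ * (‖w‖⁻¹ * ⟪u, w⟫) := by
      rw [inner_sub_right, inner_neg_right, inner_smul_right, inner_smul_right,
        inner_smul_right]
    rw [expand, real_inner_self_eq_norm_sq]
    have h1 : ‖u‖⁻¹ * (‖u‖ ^ 2) = ‖u‖ := by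
      field_simp
    rw [h1]
    have hcs : -(‖u‖ * ‖w‖) ≤ ⟪u, w⟫ := neg_le_of_abs_le (abs_real_inner_le_norm u w)
    have h2 : -(ζ * (‖w‖⁻¹ * ⟪u, w⟫)) ≤ ζ * ‖u‖ := by
      have : ‖w‖⁻¹ * ⟪u, w⟫ ≥ ‖w‖⁻¹ * (-(‖u‖ * ‖w‖)) := by
        apply mul_le_mul_of_nonneg_left hcs (by positivity)
      have h3 : ‖w‖⁻¹ * (-(‖u‖ * ‖w‖)) = -‖u‖ := by
        field_simp
      nlinarith [hζ.1]
    nlinarith [hζ.2, hu]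
  have hmono : AntitoneOn (fun t => f (x t)) (Set.Ico (0 : ℝ) T) := by
    apply antitoneOn_of_deriv_nonpos (convex_Ico 0 T)
    · intro t ht
      exact ((key t ht).continuousAt).continuousWithinAt
    · intro t ht
      rw [interior_Ico] at ht
      have ht' : t ∈ Set.Ico (0 : ℝ) T := ⟨le_of_lt ht.1, ht.2⟩
      exact (key t ht').differentiableAt.differentiableWithinAt
    · intro t ht
      rw [interior_Ico] at ht
      have ht' : t ∈ Set.Ico (0 : ℝ) T := ⟨le_of_lt ht.1, ht.2⟩
      rw [(key t ht').deriv]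
      exact hder_nonpos t ht'
  refine ⟨hmono, fun t ht => ?_⟩
  exact hmono (Set.left_mem_Ico.mpr (lt_of_le_of_lt ht.1 ht.2)) ht ht.1
end

section
/- (Lipschitz continuity of the GDAM field.) Let E = EuclideanSpace ℝ (Fin n), let S ⊆ E, and let f, g : E → ℝ be differentiable. Suppose the gradient maps ∇f and ∇g are Lipschitz on S with constants L_f and L_g respectively, and that there exist a, b > 0 with ‖∇f(y)‖ ≥ a and ‖∇g(y)‖ ≥ b for every y ∈ S. Then for every ζ ∈ [0,1] the GDAM vector field s_ζ(y) = −∇f(y)/‖∇f(y)‖ − ζ·∇g(y)/‖∇g(y)‖ is Lipschitz on S, i.e. there exists L > 0 with ‖s_ζ(y) − s_ζ(z)‖ ≤ L‖y − z‖ for all y, z ∈ S. -/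
lemma normalize_lip {E : Type*} [NormedAddCommGroup E] [NormedSpace ℝ E]
    (u v : E) (a : ℝ) (ha : 0 < a) (hu : a ≤ ‖u‖) (hv : a ≤ ‖v‖) :
    ‖‖u‖⁻¹ • u - ‖v‖⁻¹ • v‖ ≤ (2 / a) * ‖u - v‖ := by
  have hu0 : (0:ℝ) < ‖u‖ := lt_of_lt_of_le ha hu
  have hv0 : (0:ℝ) < ‖v‖ := lt_of_lt_of_le ha hv
  have key : ‖u‖⁻¹ • u - ‖v‖⁻¹ • v = ‖u‖⁻¹ • (u - v) + (‖u‖⁻¹ - ‖v‖⁻¹) • v := by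
    rw [smul_sub, sub_smul]; abel
  rw [key]
  have h1 : ‖‖u‖⁻¹ • (u - v)‖ ≤ a⁻¹ * ‖u - v‖ := by
    rw [norm_smul, Real.norm_eq_abs, abs_of_pos (inv_pos.mpr hu0)]
    gcongr
  have h2 : ‖(‖u‖⁻¹ - ‖v‖⁻¹) • v‖ ≤ a⁻¹ * ‖u - v‖ := by
    rw [norm_smul, Real.norm_eq_abs]
    have heq : ‖u‖⁻¹ - ‖v‖⁻¹ = (‖v‖ - ‖u‖) / (‖u‖ * ‖v‖) := by
      field_simp
    rw [heq, abs_div, abs_of_pos (mul_pos hu0 hv0)]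
    have habs : |‖v‖ - ‖u‖| ≤ ‖u - v‖ := by
      rw [abs_sub_comm]
      exact abs_norm_sub_norm_le u v
    calc |‖v‖ - ‖u‖| / (‖u‖ * ‖v‖) * ‖v‖ = |‖v‖ - ‖u‖| / ‖u‖ := by
          field_simp
      _ ≤ ‖u - v‖ / a := by
          exact div_le_div₀ (norm_nonneg _) habs ha hu
      _ = a⁻¹ * ‖u - v‖ := by rw [div_eq_inv_mul]
  calc ‖‖u‖⁻¹ • (u - v) + (‖u‖⁻¹ - ‖v‖⁻¹) • v‖
      ≤ ‖‖u‖⁻¹ • (u - v)‖ + ‖(‖u‖⁻¹ - ‖v‖⁻¹) • v‖ := norm_add_le _ _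
    _ ≤ a⁻¹ * ‖u - v‖ + a⁻¹ * ‖u - v‖ := add_le_add h1 h2
    _ = (2 / a) * ‖u - v‖ := by ring

/-- Lipschitz continuity of the GDAM field: if `∇f` and `∇g` are
Lipschitz on `S` and bounded below in norm by positive constants there, then
for every `ζ ∈ [0,1]` the GDAM vector field is Lipschitz on `S`. -/
theorem gdam_field_lipschitz {n : ℕ}
    (S : Set (EuclideanSpace ℝ (Fin n)))
    (f g : EuclideanSpace ℝ (Fin n) → ℝ)
    (hf : Differentiable ℝ f) (hg : Differentiable ℝ g)
    (Lf Lg a b : ℝ) (ha : 0 < a) (hb : 0 < b)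
    (hlipf : ∀ y ∈ S, ∀ z ∈ S, ‖gradient f y - gradient f z‖ ≤ Lf * ‖y - z‖)
    (hlipg : ∀ y ∈ S, ∀ z ∈ S, ‖gradient g y - gradient g z‖ ≤ Lg * ‖y - z‖)
    (hlowf : ∀ y ∈ S, a ≤ ‖gradient f y‖)
    (hlowg : ∀ y ∈ S, b ≤ ‖gradient g y‖)
    (ζ : ℝ) (hζ : ζ ∈ Set.Icc (0 : ℝ) 1) :
    ∃ L > 0, ∀ y ∈ S, ∀ z ∈ S,
      ‖(-(‖gradient f y‖⁻¹ • gradient f y)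
          - ζ • (‖gradient g y‖⁻¹ • gradient g y))
        - (-(‖gradient f z‖⁻¹ • gradient f z)
          - ζ • (‖gradient g z‖⁻¹ • gradient g z))‖ ≤ L * ‖y - z‖ := by
  obtain ⟨hζ0, hζ1⟩ := hζ
  set Lf' := max Lf 0 with hLf'
  set Lg' := max Lg 0 with hLg'
  refine ⟨2 / a * Lf' + 2 / b * Lg' + 1, by positivity, ?_⟩
  intro y hy z hz
  set Fy := gradient f y; set Fz := gradient f z
  set Gy := gradient g y; set Gz := gradient g z
  have h1 : ‖‖Fy‖⁻¹ • Fy - ‖Fz‖⁻¹ • Fz‖ ≤ 2 / a * (Lf' * ‖y - z‖) := by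
    calc ‖‖Fy‖⁻¹ • Fy - ‖Fz‖⁻¹ • Fz‖ ≤ 2 / a * ‖Fy - Fz‖ :=
          normalize_lip Fy Fz a ha (hlowf y hy) (hlowf z hz)
      _ ≤ 2 / a * (Lf' * ‖y - z‖) := by
          gcongr
          exact (hlipf y hy z hz).trans (by gcongr; exact le_max_left _ _)
  have h2 : ‖‖Gy‖⁻¹ • Gy - ‖Gz‖⁻¹ • Gz‖ ≤ 2 / b * (Lg' * ‖y - z‖) := by
    calc ‖‖Gy‖⁻¹ • Gy - ‖Gz‖⁻¹ • Gz‖ ≤ 2 / b * ‖Gy - Gz‖ :=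
          normalize_lip Gy Gz b hb (hlowg y hy) (hlowg z hz)
      _ ≤ 2 / b * (Lg' * ‖y - z‖) := by
          gcongr
          exact (hlipg y hy z hz).trans (by gcongr; exact le_max_left _ _)
  have key : (-(‖Fy‖⁻¹ • Fy) - ζ • (‖Gy‖⁻¹ • Gy))
        - (-(‖Fz‖⁻¹ • Fz) - ζ • (‖Gz‖⁻¹ • Gz))
      = -(‖Fy‖⁻¹ • Fy - ‖Fz‖⁻¹ • Fz) - ζ • (‖Gy‖⁻¹ • Gy - ‖Gz‖⁻¹ • Gz) := by
    rw [smul_sub]; abel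
  rw [key]
  calc ‖-(‖Fy‖⁻¹ • Fy - ‖Fz‖⁻¹ • Fz) - ζ • (‖Gy‖⁻¹ • Gy - ‖Gz‖⁻¹ • Gz)‖
      ≤ ‖‖Fy‖⁻¹ • Fy - ‖Fz‖⁻¹ • Fz‖ + ‖ζ • (‖Gy‖⁻¹ • Gy - ‖Gz‖⁻¹ • Gz)‖ := by
        apply (norm_sub_le _ _).trans; rw [norm_neg]
    _ ≤ 2 / a * (Lf' * ‖y - z‖) + 1 * ‖‖Gy‖⁻¹ • Gy - ‖Gz‖⁻¹ • Gz‖ := by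
        apply add_le_add h1
        rw [norm_smul, Real.norm_eq_abs, abs_of_nonneg hζ0]
        gcongr
    _ ≤ 2 / a * (Lf' * ‖y - z‖) + 1 * (2 / b * (Lg' * ‖y - z‖)) := by
        gcongr
    _ ≤ (2 / a * Lf' + 2 / b * Lg' + 1) * ‖y - z‖ := by
        have := norm_nonneg (y - z); nlinarith
end

section
/- (Monotonicity of the constraint relative to the central-path neighborhood.) Let ζ ∈ [0,1) and let x : ℝ → E be a GDAM trajectory, with ∇f(x(t)) ≠ 0 and ∇g(x(t)) ≠ 0 at a time t. If cos θ(x(t)) < −ζ then the derivative of t ↦ g(x(t)) at t is strictly positive (g increases), and if cos θ(x(t)) > −ζ then this derivative is strictly negative (g decreases). -/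
open RealInnerProductSpace

/-- Monotonicity of the constraint relative to the central-path
neighborhood: inside `Θ_ζ = {cos θ < -ζ}` the constraint `g` strictly
increases along the trajectory; outside (`cos θ > -ζ`) it strictly decreases. -/
theorem gdam_constraint_monotonicity {n : ℕ}
    (f g : EuclideanSpace ℝ (Fin n) → ℝ)
    (hf : ContDiff ℝ 2 f) (hg : ContDiff ℝ 2 g)
    (ζ : ℝ) (hζ : ζ ∈ Set.Ico (0 : ℝ) 1)
    (x : ℝ → EuclideanSpace ℝ (Fin n)) (t : ℝ)
    (hgf : gradient f (x t) ≠ 0)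
    (hgg : gradient g (x t) ≠ 0)
    (hx : HasDerivAt x
      (-(‖gradient f (x t)‖⁻¹ • gradient f (x t))
        - ζ • (‖gradient g (x t)‖⁻¹ • gradient g (x t))) t) :
    ((⟪gradient f (x t), gradient g (x t)⟫ /
        (‖gradient f (x t)‖ * ‖gradient g (x t)‖)) < -ζ →
      0 < deriv (fun s => g (x s)) t) ∧
    ((-ζ < ⟪gradient f (x t), gradient g (x t)⟫ /
        (‖gradient f (x t)‖ * ‖gradient g (x t)‖)) →
      deriv (fun s => g (x s)) t < 0) := by
  set F := gradient f (x t)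
  set G := gradient g (x t)
  have hgd : HasGradientAt g G (x t) :=
    ((hg.differentiable (by norm_num)) (x t)).hasGradientAt
  have hcomp : HasDerivAt (fun s => g (x s))
      ⟪G, -(‖F‖⁻¹ • F) - ζ • (‖G‖⁻¹ • G)⟫ t := by
    have := hgd.hasFDerivAt.comp_hasDerivAt t hx
    simp at this
    exact this
  have hA : (0:ℝ) < ‖F‖ := norm_pos_iff.mpr hgf
  have hB : (0:ℝ) < ‖G‖ := norm_pos_iff.mpr hgg
  have hval : deriv (fun s => g (x s)) t =
      -‖G‖ * (⟪F, G⟫ / (‖F‖ * ‖G‖) + ζ) := by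
    rw [hcomp.deriv]
    rw [inner_sub_right, inner_neg_right, inner_smul_right, inner_smul_right,
      inner_smul_right, real_inner_self_eq_norm_sq, real_inner_comm]
    field_simp
    ring
  constructor
  · intro h
    rw [hval]
    nlinarith
  · intro h
    rw [hval]
    nlinarith
end

section
/- Let ζ ∈ [0,1) and let x : ℝ → E be a GDAM trajectory on [0,T], i.e. x'(t) = s_ζ(x(t)) with ∇f(x(t)) ≠ 0 and ∇g(x(t)) ≠ 0 for all t ∈ [0,T]. Then f(x(T)) ≤ f(x(0)) − (1 − ζ) · ∫₀ᵀ ‖∇f(x(s))‖ ds. -/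
open RealInnerProductSpace
open Set MeasureTheory

/-- along a GDAM trajectory on `[0,T]`,
`f(x(T)) ≤ f(x(0)) - (1-ζ) ∫₀ᵀ ‖∇f(x(s))‖ ds`. -/
theorem gdam_objective_decrease_integral {n : ℕ}
    (f g : EuclideanSpace ℝ (Fin n) → ℝ)
    (hf : ContDiff ℝ 2 f) (hg : ContDiff ℝ 2 g)
    (ζ : ℝ) (hζ : ζ ∈ Set.Ico (0 : ℝ) 1)
    (T : ℝ) (hT : 0 ≤ T)
    (x : ℝ → EuclideanSpace ℝ (Fin n))
    (hgf : ∀ t ∈ Set.Icc (0 : ℝ) T, gradient f (x t) ≠ 0)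
    (hgg : ∀ t ∈ Set.Icc (0 : ℝ) T, gradient g (x t) ≠ 0)
    (hx : ∀ t ∈ Set.Icc (0 : ℝ) T, HasDerivAt x
      (-(‖gradient f (x t)‖⁻¹ • gradient f (x t))
        - ζ • (‖gradient g (x t)‖⁻¹ • gradient g (x t))) t) :
    f (x T) ≤ f (x 0) - (1 - ζ) * ∫ s in (0 : ℝ)..T, ‖gradient f (x s)‖ := by
  have hgradcont : Continuous (gradient f) := by
    have : gradient f = fun y => (InnerProductSpace.toDual ℝ (EuclideanSpace ℝ (Fin n))).symm (fderiv ℝ f y) := rfl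
    rw [this]
    exact (InnerProductSpace.toDual ℝ (EuclideanSpace ℝ (Fin n))).symm.continuous.comp
      (hf.continuous_fderiv (by norm_num))
  have hxcont : ContinuousOn x (Icc 0 T) := fun t ht =>
    (hx t ht).continuousAt.continuousWithinAt
  set v : ℝ → EuclideanSpace ℝ (Fin n) := fun t => -(‖gradient f (x t)‖⁻¹ • gradient f (x t))
        - ζ • (‖gradient g (x t)‖⁻¹ • gradient g (x t)) with hv
  have hφderiv : ∀ t ∈ Icc (0:ℝ) T,
      HasDerivAt (fun t => f (x t)) ⟪gradient f (x t), v t⟫ t := by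
    intro t ht
    have h1 : HasGradientAt f (gradient f (x t)) (x t) :=
      (hf.differentiable (by norm_num) (x t)).hasGradientAt
    have := h1.hasFDerivAt.comp_hasDerivAt t (hx t ht)
    simp only [InnerProductSpace.toDual, hv] at this ⊢
    simp at this ⊢
    exact this
  have hbound : ∀ t ∈ Icc (0:ℝ) T,
      ⟪gradient f (x t), v t⟫ ≤ -((1 - ζ) * ‖gradient f (x t)‖) := by
    intro t ht
    set a := gradient f (x t)
    set b := gradient g (x t)
    have ha : ‖a‖ ≠ 0 := norm_ne_zero_iff.2 (hgf t ht)
    have hb : ‖b‖ ≠ 0 := norm_ne_zero_iff.2 (hgg t ht)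
    have h1 : ⟪a, v t⟫ = -‖a‖ - ζ * (‖b‖⁻¹ * ⟪a, b⟫) := by
      simp only [hv, inner_sub_right, inner_neg_right, inner_smul_right,
        real_inner_self_eq_norm_sq]
      change -(‖a‖⁻¹ * ⟪a, a⟫) - ζ * (‖b‖⁻¹ * ⟪a, b⟫) = _
      rw [real_inner_self_eq_norm_sq]
      field_simp
    have h2 : -(‖a‖ * ‖b‖) ≤ ⟪a, b⟫ := neg_le_of_abs_le (abs_real_inner_le_norm a b)
    rw [h1]
    have hbpos : (0:ℝ) < ‖b‖ := lt_of_le_of_ne (norm_nonneg _) (Ne.symm hb)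
    have : ζ * (‖b‖⁻¹ * ⟪a, b⟫) ≥ ζ * (‖b‖⁻¹ * -(‖a‖ * ‖b‖)) := by
      apply mul_le_mul_of_nonneg_left _ hζ.1
      exact mul_le_mul_of_nonneg_left h2 (by positivity)
    have heq : ζ * (‖b‖⁻¹ * -(‖a‖ * ‖b‖)) = -(ζ * ‖a‖) := by field_simp
    nlinarith
  have hφint : IntegrableOn (fun t => -((1 - ζ) * ‖gradient f (x t)‖)) (Icc 0 T) := by
    apply ContinuousOn.integrableOn_Icc
    exact (((hgradcont.comp_continuousOn hxcont).norm.const_smul (1-ζ)).neg)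
  have key := intervalIntegral.sub_le_integral_of_hasDeriv_right_of_le hT
    ((hf.continuous.comp_continuousOn hxcont))
    (fun t ht => ((hφderiv t (Ioo_subset_Icc_self ht)).hasDerivWithinAt))
    hφint
    (fun t ht => hbound t (Ioo_subset_Icc_self ht))
  have hint : (∫ s in (0:ℝ)..T, -((1 - ζ) * ‖gradient f (x s)‖))
      = -((1 - ζ) * ∫ s in (0:ℝ)..T, ‖gradient f (x s)‖) := by
    rw [intervalIntegral.integral_neg, intervalIntegral.integral_const_mul]
  rw [hint] at key
  simp only [Function.comp_apply] at key
  linarith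
end

section
/- (The trajectory must leave the feasible set.) Let ζ ∈ [0,1) and let x : ℝ → E be a GDAM trajectory defined for all t ≥ 0, i.e. x'(t) = s_ζ(x(t)) with ∇f(x(t)) ≠ 0 and ∇g(x(t)) ≠ 0 for all t ≥ 0. If there is A > 0 with ‖∇f(x(t))‖ ≥ A for all t ≥ 0, then f(x(t)) ≤ f(x(0)) − A(1 − ζ)t for every t ≥ 0; consequently f(x(t)) → −∞ as t → ∞, so t ↦ f(x(t)) cannot be bounded below. -/
open RealInnerProductSpace Filter

/-- The trajectory must leave the feasible set: if `‖∇f(x(t))‖ ≥ A > 0`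
along a GDAM trajectory defined for all `t ≥ 0`, then
`f(x(t)) ≤ f(x(0)) - A(1-ζ)t`, hence `f(x(t)) → -∞` and `t ↦ f(x(t))` is not
bounded below. -/
theorem gdam_leaves_feasible_set {n : ℕ}
    (f g : EuclideanSpace ℝ (Fin n) → ℝ)
    (hf : ContDiff ℝ 2 f) (hg : ContDiff ℝ 2 g)
    (ζ : ℝ) (hζ : ζ ∈ Set.Ico (0 : ℝ) 1)
    (x : ℝ → EuclideanSpace ℝ (Fin n))
    (hgf : ∀ t : ℝ, 0 ≤ t → gradient f (x t) ≠ 0)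
    (hgg : ∀ t : ℝ, 0 ≤ t → gradient g (x t) ≠ 0)
    (hx : ∀ t : ℝ, 0 ≤ t → HasDerivAt x
      (-(‖gradient f (x t)‖⁻¹ • gradient f (x t))
        - ζ • (‖gradient g (x t)‖⁻¹ • gradient g (x t))) t)
    (A : ℝ) (hA : 0 < A)
    (hlow : ∀ t : ℝ, 0 ≤ t → A ≤ ‖gradient f (x t)‖) :
    (∀ t : ℝ, 0 ≤ t → f (x t) ≤ f (x 0) - A * (1 - ζ) * t) ∧
      Tendsto (fun t => f (x t)) atTop atBot ∧
      ¬ BddBelow ((fun t => f (x t)) '' Set.Ici (0 : ℝ)) := by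
  obtain ⟨hζ0, hζ1⟩ := hζ
  have hfd : Differentiable ℝ f := hf.differentiable (by norm_num)
  -- the derivative of ψ t = f (x t) + A (1-ζ) t is nonpositive on [0,∞)
  have key : ∀ t : ℝ, 0 ≤ t →
      HasDerivAt (fun t => f (x t) + A * (1 - ζ) * t)
        (⟪gradient f (x t), (-(‖gradient f (x t)‖⁻¹ • gradient f (x t))
          - ζ • (‖gradient g (x t)‖⁻¹ • gradient g (x t)))⟫ + A * (1 - ζ)) t := by
    intro t ht
    have h1 : HasDerivAt (fun t => f (x t))
        (⟪gradient f (x t), (-(‖gradient f (x t)‖⁻¹ • gradient f (x t))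
          - ζ • (‖gradient g (x t)‖⁻¹ • gradient g (x t)))⟫) t := by
      have hgrad := (hfd (x t)).hasGradientAt
      have := hgrad.hasFDerivAt.comp_hasDerivAt t (hx t ht)
      simp at this ⊢
      exact this
    have h := h1.add ((hasDerivAt_id t).const_mul (A * (1 - ζ)))
    simp at h ⊢
    exact h
  have hderiv_le : ∀ t : ℝ, 0 ≤ t →
      ⟪gradient f (x t), (-(‖gradient f (x t)‖⁻¹ • gradient f (x t))
        - ζ • (‖gradient g (x t)‖⁻¹ • gradient g (x t)))⟫ + A * (1 - ζ) ≤ 0 := by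
    intro t ht
    set u := gradient f (x t)
    set v := gradient g (x t)
    have hu : u ≠ 0 := hgf t ht
    have hv : v ≠ 0 := hgg t ht
    have hun : (0:ℝ) < ‖u‖ := norm_pos_iff.mpr hu
    have hvn : (0:ℝ) < ‖v‖ := norm_pos_iff.mpr hv
    have hinner : ⟪u, (-(‖u‖⁻¹ • u) - ζ • (‖v‖⁻¹ • v))⟫
        = -‖u‖ - ζ * ‖v‖⁻¹ * ⟪u, v⟫ := by
      rw [inner_sub_right, inner_neg_right, real_inner_smul_right,
        real_inner_smul_right, real_inner_smul_right, real_inner_self_eq_norm_sq]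
      field_simp
    have hcs : |⟪u, v⟫| ≤ ‖u‖ * ‖v‖ := abs_real_inner_le_norm u v
    have h2 : ζ * ‖v‖⁻¹ * ⟪u, v⟫ ≥ -(ζ * ‖u‖) := by
      have h3 : -(‖u‖ * ‖v‖) ≤ ⟪u, v⟫ := neg_le_of_abs_le hcs
      have h4 : ζ * ‖v‖⁻¹ * -(‖u‖ * ‖v‖) ≤ ζ * ‖v‖⁻¹ * ⟪u, v⟫ := by
        apply mul_le_mul_of_nonneg_left h3
        positivity
      calc -(ζ * ‖u‖) = ζ * ‖v‖⁻¹ * -(‖u‖ * ‖v‖) := by field_simp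
        _ ≤ _ := h4
    have hAle : A ≤ ‖u‖ := hlow t ht
    rw [hinner]
    nlinarith [hAle, hζ1, hζ0]
  -- antitonicity of ψ on [0,∞)
  have hanti : AntitoneOn (fun t => f (x t) + A * (1 - ζ) * t) (Set.Ici 0) := by
    apply antitoneOn_of_deriv_nonpos (convex_Ici 0)
    · intro t ht
      exact ((key t ht).continuousAt).continuousWithinAt
    · intro t ht
      rw [interior_Ici] at ht
      exact ((key t ht.le).differentiableAt).differentiableWithinAt
    · intro t ht
      rw [interior_Ici] at ht
      rw [(key t ht.le).deriv]
      exact hderiv_le t ht.le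
  have main : ∀ t : ℝ, 0 ≤ t → f (x t) ≤ f (x 0) - A * (1 - ζ) * t := by
    intro t ht
    have := hanti (Set.self_mem_Ici) ht ht
    simp only at this
    linarith
  refine ⟨main, ?_, ?_⟩
  · have hpos : (0:ℝ) < A * (1 - ζ) := by nlinarith
    have hlim : Tendsto (fun t : ℝ => f (x 0) - A * (1 - ζ) * t) atTop atBot := by
      apply tendsto_atBot_add_const_left
      exact tendsto_neg_atBot_iff.mpr (Tendsto.const_mul_atTop hpos tendsto_id)
    apply tendsto_atBot_mono' atTop _ hlim
    filter_upwards [eventually_ge_atTop (0:ℝ)] with t ht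
    exact main t ht
  · rintro ⟨m, hm⟩
    set T := max 0 ((f (x 0) - m + 1) / (A * (1 - ζ))) with hT
    have hpos : (0:ℝ) < A * (1 - ζ) := by nlinarith
    have hT0 : 0 ≤ T := le_max_left _ _
    have hmem : f (x T) ∈ (fun t => f (x t)) '' Set.Ici (0:ℝ) :=
      ⟨T, hT0, rfl⟩
    have h1 : m ≤ f (x T) := hm hmem
    have h2 : f (x T) ≤ f (x 0) - A * (1 - ζ) * T := main T hT0
    have h3 : (f (x 0) - m + 1) / (A * (1 - ζ)) ≤ T := le_max_right _ _
    have h4 : f (x 0) - m + 1 ≤ A * (1 - ζ) * T := by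
      rw [div_le_iff₀ hpos] at h3
      linarith
    linarith
end

section
/- (Upper bound on the time to reach the constraint boundary.) Let ζ ∈ [0,1) and let x : ℝ → E be a GDAM trajectory on [0,T♯], i.e. x'(t) = s_ζ(x(t)) with ∇f(x(t)) ≠ 0 and ∇g(x(t)) ≠ 0 on [0,T♯]. Suppose there are constants A, B > 0 with ‖∇f(x(t))‖ ≥ A and |f(x(t))| ≤ B for all t ∈ [0,T♯]. Then T♯ ≤ 2B / (A(1 − ζ)). -/
open RealInnerProductSpace

/-- Upper bound on the time to reach the constraint boundary:
if `‖∇f(x(t))‖ ≥ A > 0` and `|f(x(t))| ≤ B` along a GDAM trajectory on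
`[0, T♯]`, then `T♯ ≤ 2B/(A(1-ζ))`. -/
theorem gdam_time_to_boundary {n : ℕ}
    (f g : EuclideanSpace ℝ (Fin n) → ℝ)
    (hf : ContDiff ℝ 2 f) (hg : ContDiff ℝ 2 g)
    (ζ : ℝ) (hζ : ζ ∈ Set.Ico (0 : ℝ) 1)
    (Tsharp : ℝ) (hT : 0 ≤ Tsharp)
    (x : ℝ → EuclideanSpace ℝ (Fin n))
    (hgf : ∀ t ∈ Set.Icc (0 : ℝ) Tsharp, gradient f (x t) ≠ 0)
    (hgg : ∀ t ∈ Set.Icc (0 : ℝ) Tsharp, gradient g (x t) ≠ 0)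
    (hx : ∀ t ∈ Set.Icc (0 : ℝ) Tsharp, HasDerivAt x
      (-(‖gradient f (x t)‖⁻¹ • gradient f (x t))
        - ζ • (‖gradient g (x t)‖⁻¹ • gradient g (x t))) t)
    (A B : ℝ) (hA : 0 < A) (hB : 0 < B)
    (hlow : ∀ t ∈ Set.Icc (0 : ℝ) Tsharp, A ≤ ‖gradient f (x t)‖)
    (hbound : ∀ t ∈ Set.Icc (0 : ℝ) Tsharp, |f (x t)| ≤ B) :
    Tsharp ≤ 2 * B / (A * (1 - ζ)) := by
  obtain ⟨hζ0, hζ1⟩ := hζ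
  set c : ℝ := A * (1 - ζ) with hc
  have hcpos : 0 < c := mul_pos hA (by linarith)
  -- the auxiliary function
  set ψ : ℝ → ℝ := fun t => f (x t) + c * t with hψ
  have hderiv : ∀ t ∈ Set.Icc (0 : ℝ) Tsharp,
      HasDerivAt ψ (⟪gradient f (x t), (-(‖gradient f (x t)‖⁻¹ • gradient f (x t))
        - ζ • (‖gradient g (x t)‖⁻¹ • gradient g (x t)))⟫ + c) t := by
    intro t ht
    have hdf : DifferentiableAt ℝ f (x t) :=
      (hf.differentiable (by norm_num)).differentiableAt
    have hgrad : HasGradientAt f (gradient f (x t)) (x t) := hdf.hasGradientAt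
    have hfd := hgrad.hasFDerivAt
    have hcomp := hfd.comp_hasDerivAt t (hx t ht)
    have : HasDerivAt (fun s => f (x s))
        (⟪gradient f (x t), (-(‖gradient f (x t)‖⁻¹ • gradient f (x t))
        - ζ • (‖gradient g (x t)‖⁻¹ • gradient g (x t)))⟫) t := by
      simp [InnerProductSpace.toDual_apply_apply] at hcomp ⊢; exact hcomp
    have h := this.add ((hasDerivAt_id t).const_mul c); simp at h ⊢; exact h
  have hval : ∀ t ∈ Set.Icc (0 : ℝ) Tsharp,
      ⟪gradient f (x t), (-(‖gradient f (x t)‖⁻¹ • gradient f (x t))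
        - ζ • (‖gradient g (x t)‖⁻¹ • gradient g (x t)))⟫ + c ≤ 0 := by
    intro t ht
    set u := gradient f (x t)
    set v := gradient g (x t)
    have hu : u ≠ 0 := hgf t ht
    have hv : v ≠ 0 := hgg t ht
    have hun : (0:ℝ) < ‖u‖ := norm_pos_iff.mpr hu
    have hvn : (0:ℝ) < ‖v‖ := norm_pos_iff.mpr hv
    have h1 : ⟪u, (-(‖u‖⁻¹ • u) - ζ • (‖v‖⁻¹ • v))⟫
        = -‖u‖ - ζ * ‖v‖⁻¹ * ⟪u, v⟫ := by
      rw [inner_sub_right, inner_neg_right, real_inner_smul_right,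
        real_inner_smul_right, real_inner_smul_right, real_inner_self_eq_norm_sq]
      field_simp
    have hcs : -(‖u‖ * ‖v‖) ≤ ⟪u, v⟫ :=
      neg_abs_le _ |>.trans' (by
        have := abs_real_inner_le_norm u v
        linarith)
    have hA' : A ≤ ‖u‖ := hlow t ht
    have hinv : ‖v‖⁻¹ * ‖v‖ = 1 := inv_mul_cancel₀ hvn.ne'
    rw [h1]
    have h2 : -(ζ * ‖u‖) ≤ ζ * ‖v‖⁻¹ * ⟪u, v⟫ := by
      have h3 : ζ * ‖v‖⁻¹ * (-(‖u‖ * ‖v‖)) ≤ ζ * ‖v‖⁻¹ * ⟪u, v⟫ :=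
        mul_le_mul_of_nonneg_left hcs (by positivity)
      calc -(ζ * ‖u‖) = ζ * ‖v‖⁻¹ * (-(‖u‖ * ‖v‖)) := by
            field_simp
        _ ≤ _ := h3
    nlinarith [mul_le_mul_of_nonneg_right hA' (by linarith : (0:ℝ) ≤ 1 - ζ)]
  -- ψ is antitone on [0, Tsharp]
  have hanti : AntitoneOn ψ (Set.Icc 0 Tsharp) := by
    apply antitoneOn_of_deriv_nonpos (convex_Icc 0 Tsharp)
    · exact fun t ht => ((hderiv t ht).continuousAt).continuousWithinAt
    · intro t ht
      rw [interior_Icc] at ht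
      exact (hderiv t (Set.mem_Icc_of_Ioo ht)).differentiableAt.differentiableWithinAt
    · intro t ht
      rw [interior_Icc] at ht
      have ht' := Set.mem_Icc_of_Ioo ht
      rw [(hderiv t ht').deriv]
      exact hval t ht'
  have h0 : (0:ℝ) ∈ Set.Icc (0:ℝ) Tsharp := ⟨le_refl _, hT⟩
  have hTm : Tsharp ∈ Set.Icc (0:ℝ) Tsharp := ⟨hT, le_refl _⟩
  have hle := hanti h0 hTm hT
  have hb0 := abs_le.mp (hbound 0 h0)
  have hbT := abs_le.mp (hbound Tsharp hTm)
  have : c * Tsharp ≤ 2 * B := by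
    simp only [hψ, mul_zero, add_zero] at hle
    linarith
  rw [le_div_iff₀ hcpos]
  nlinarith [this]
end

section
/- (Error bound at the solution point.) Let ζ ∈ [0,1) and let x : ℝ → E be a GDAM trajectory on [0,t♯], i.e. x'(t) = s_ζ(x(t)) with ∇f(x(t)) ≠ 0 and ∇g(x(t)) ≠ 0 on [0,t♯]. Suppose g(x(t)) < 0 for all t ∈ [0,t♯) and g(x(t♯)) = 0, and write x♯ = x(t♯). Then the solution error satisfies ε(x♯) = ‖∇f(x♯)/‖∇f(x♯)‖ + ∇g(x♯)/‖∇g(x♯)‖‖ ≤ √(2(1 − ζ)). -/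
open RealInnerProductSpace

/-- Error bound at the solution point: at the first intersection
`x♯ = x(t♯)` of a GDAM trajectory with the constraint boundary, the solution
error satisfies `ε(x♯) = ‖∇f(x♯)/‖∇f(x♯)‖ + ∇g(x♯)/‖∇g(x♯)‖‖ ≤ √(2(1-ζ))`. -/
theorem gdam_solution_error_bound {n : ℕ}
    (f g : EuclideanSpace ℝ (Fin n) → ℝ)
    (hf : ContDiff ℝ 2 f) (hg : ContDiff ℝ 2 g)
    (ζ : ℝ) (hζ : ζ ∈ Set.Ico (0 : ℝ) 1)
    (tsharp : ℝ) (ht : 0 < tsharp)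
    (x : ℝ → EuclideanSpace ℝ (Fin n))
    (hgf : ∀ t ∈ Set.Icc (0 : ℝ) tsharp, gradient f (x t) ≠ 0)
    (hgg : ∀ t ∈ Set.Icc (0 : ℝ) tsharp, gradient g (x t) ≠ 0)
    (hx : ∀ t ∈ Set.Icc (0 : ℝ) tsharp, HasDerivAt x
      (-(‖gradient f (x t)‖⁻¹ • gradient f (x t))
        - ζ • (‖gradient g (x t)‖⁻¹ • gradient g (x t))) t)
    (hneg : ∀ t ∈ Set.Ico (0 : ℝ) tsharp, g (x t) < 0)
    (hzero : g (x tsharp) = 0) :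
    ‖(‖gradient f (x tsharp)‖⁻¹ • gradient f (x tsharp))
        + (‖gradient g (x tsharp)‖⁻¹ • gradient g (x tsharp))‖
      ≤ Real.sqrt (2 * (1 - ζ)) := by
  have htmem : tsharp ∈ Set.Icc (0 : ℝ) tsharp := ⟨ht.le, le_refl _⟩
  set p := x tsharp with hp
  set Gf := gradient f p with hGf
  set Gg := gradient g p with hGg
  have hGf0 : Gf ≠ 0 := hgf tsharp htmem
  have hGg0 : Gg ≠ 0 := hgg tsharp htmem
  have hnGf : (0:ℝ) < ‖Gf‖ := norm_pos_iff.mpr hGf0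
  have hnGg : (0:ℝ) < ‖Gg‖ := norm_pos_iff.mpr hGg0
  set w := -(‖Gf‖⁻¹ • Gf) - ζ • (‖Gg‖⁻¹ • Gg) with hw
  -- derivative of g ∘ x at tsharp
  have hgd : DifferentiableAt ℝ g p :=
    (hg.differentiable (by norm_num)).differentiableAt
  have hgrad : HasGradientAt g Gg p := hgd.hasGradientAt
  have hchain : HasDerivAt (fun t => g (x t)) (⟪Gg, w⟫) tsharp := by
    have := hgrad.hasFDerivAt.comp_hasDerivAt tsharp (hx tsharp htmem)
    simpa [Function.comp_def] using this
  -- derivative nonneg since g(x t) < 0 = g(x tsharp) for t < tsharp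
  have hd_nonneg : (0:ℝ) ≤ ⟪Gg, w⟫ := by
    have hW : HasDerivWithinAt (fun t => g (x t)) (⟪Gg, w⟫) (Set.Iio tsharp) tsharp :=
      hchain.hasDerivWithinAt
    have hslope : Filter.Tendsto (slope (fun t => g (x t)) tsharp)
        (nhdsWithin tsharp (Set.Iio tsharp)) (nhds (⟪Gg, w⟫)) := by
      have := (hasDerivWithinAt_iff_tendsto_slope (f := fun t => g (x t))
        (s := Set.Iio tsharp) (x := tsharp)).mp hW
      simpa [Set.diff_singleton_eq_self (fun h => lt_irrefl tsharp h)] using this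
    refine ge_of_tendsto hslope ?_
    have hmem : Set.Ioo (0:ℝ) tsharp ∈ nhdsWithin tsharp (Set.Iio tsharp) := by
      rw [mem_nhdsWithin]
      exact ⟨Set.Ioi 0, isOpen_Ioi, ht, fun t ht' => ⟨ht'.1, ht'.2⟩⟩
    filter_upwards [hmem] with t htt
    have hgt : g (x t) < 0 := hneg t ⟨htt.1.le, htt.2⟩
    have hlt : t - tsharp < 0 := sub_neg.mpr htt.2
    rw [slope_def_field]
    have : g (x t) - g (x tsharp) < 0 := by rw [hzero]; simpa using hgt
    exact le_of_lt (div_pos_of_neg_of_neg this hlt)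
  -- expand inner product
  have hinner : ⟪Gg, w⟫ = -(‖Gf‖⁻¹ * ⟪Gg, Gf⟫) - ζ * ‖Gg‖ := by
    rw [hw]
    rw [inner_sub_right, inner_neg_right, inner_smul_right, inner_smul_right,
      inner_smul_right, real_inner_self_eq_norm_sq]
    field_simp
  have hkey : ⟪Gg, Gf⟫ ≤ -(ζ * ‖Gg‖ * ‖Gf‖) := by
    rw [hinner] at hd_nonneg
    have h1 : ‖Gf‖⁻¹ * ⟪Gg, Gf⟫ ≤ -(ζ * ‖Gg‖) := by linarith
    have h2 : ⟪Gg, Gf⟫ = ‖Gf‖ * (‖Gf‖⁻¹ * ⟪Gg, Gf⟫) := by field_simp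
    rw [h2]
    calc ‖Gf‖ * (‖Gf‖⁻¹ * ⟪Gg, Gf⟫) ≤ ‖Gf‖ * -(ζ * ‖Gg‖) :=
          mul_le_mul_of_nonneg_left h1 hnGf.le
      _ = -(ζ * ‖Gg‖ * ‖Gf‖) := by ring
  -- norm squared computation
  set u := ‖Gf‖⁻¹ • Gf with hu
  set v := ‖Gg‖⁻¹ • Gg with hv
  have hnu : ‖u‖ = 1 := by rw [hu, norm_smul]; simp [abs_of_pos (inv_pos.mpr hnGf)]; field_simp
  have hnv : ‖v‖ = 1 := by rw [hv, norm_smul]; simp [abs_of_pos (inv_pos.mpr hnGg)]; field_simp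
  have huv : ⟪u, v⟫ ≤ -ζ := by
    rw [hu, hv, inner_smul_left, inner_smul_right]
    simp only [RCLike.star_def, conj_trivial]
    rw [real_inner_comm]
    have h1 : (0:ℝ) < ‖Gf‖⁻¹ * ‖Gg‖⁻¹ := mul_pos (inv_pos.mpr hnGf) (inv_pos.mpr hnGg)
    calc ‖Gf‖⁻¹ * (‖Gg‖⁻¹ * ⟪Gg, Gf⟫) ≤ ‖Gf‖⁻¹ * (‖Gg‖⁻¹ * -(ζ * ‖Gg‖ * ‖Gf‖)) := by
          apply mul_le_mul_of_nonneg_left _ (inv_pos.mpr hnGf).le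
          exact mul_le_mul_of_nonneg_left hkey (inv_pos.mpr hnGg).le
      _ = -ζ := by field_simp
  have hsq : ‖u + v‖ ^ 2 ≤ 2 * (1 - ζ) := by
    rw [norm_add_sq_real, hnu, hnv]
    nlinarith [huv]
  have h2ζ : (0:ℝ) ≤ 2 * (1 - ζ) := by nlinarith [hζ.2]
  calc ‖u + v‖ = Real.sqrt (‖u + v‖ ^ 2) := by
        rw [Real.sqrt_sq (norm_nonneg _)]
    _ ≤ Real.sqrt (2 * (1 - ζ)) := Real.sqrt_le_sqrt hsq
end

section
/- (Error bound for the logarithmic-barrier formulation with multiple constraints.) Let g₁, …, g_m : E → ℝ be twice continuously differentiable, let Φ(y) = −∑_{i=1}^m log(−g_i(y)) on the open set where all g_i(y) < 0, fix M > 0 and ζ ∈ [0,1). Let x : ℝ → E satisfy x'(t) = −∇f(x(t))/‖∇f(x(t))‖ − ζ·∇Φ(x(t))/‖∇Φ(x(t))‖ on [0,t♯], with ∇f(x(t)) ≠ 0 and ∇Φ(x(t)) ≠ 0 there. Suppose Φ(x(t)) < M for all t ∈ [0,t♯) and Φ(x(t♯)) = M, and write x♯ = x(t♯). Then ⟪∇f(x♯),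 ∇Φ(x♯)⟫/(‖∇f(x♯)‖·‖∇Φ(x♯)‖) ≤ −ζ, and hence ‖∇f(x♯)/‖∇f(x♯)‖ + ∇Φ(x♯)/‖∇Φ(x♯)‖‖ ≤ √(2(1 − ζ)). -/
open RealInnerProductSpace

/-- Error bound for the logarithmic-barrier formulation with
multiple constraints: at the first time the barrier `Φ` reaches the level `M`
along the GDAM trajectory, `cos θ(x♯) ≤ -ζ` and the residual of the normalized
central path condition with `Φ` is at most `√(2(1-ζ))`. -/
theorem gdam_barrier_error_bound {n m : ℕ}
    (f : EuclideanSpace ℝ (Fin n) → ℝ)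
    (gi : Fin m → EuclideanSpace ℝ (Fin n) → ℝ)
    (hf : ContDiff ℝ 2 f) (hgi : ∀ i, ContDiff ℝ 2 (gi i))
    (Φ : EuclideanSpace ℝ (Fin n) → ℝ)
    (hΦ : ∀ y, Φ y = -∑ i, Real.log (-(gi i y)))
    (M : ℝ) (hM : 0 < M)
    (ζ : ℝ) (hζ : ζ ∈ Set.Ico (0 : ℝ) 1)
    (tsharp : ℝ) (ht : 0 < tsharp)
    (x : ℝ → EuclideanSpace ℝ (Fin n))
    (hfeas : ∀ t ∈ Set.Icc (0 : ℝ) tsharp, ∀ i, gi i (x t) < 0)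
    (hgf : ∀ t ∈ Set.Icc (0 : ℝ) tsharp, gradient f (x t) ≠ 0)
    (hgΦ : ∀ t ∈ Set.Icc (0 : ℝ) tsharp, gradient Φ (x t) ≠ 0)
    (hx : ∀ t ∈ Set.Icc (0 : ℝ) tsharp, HasDerivAt x
      (-(‖gradient f (x t)‖⁻¹ • gradient f (x t))
        - ζ • (‖gradient Φ (x t)‖⁻¹ • gradient Φ (x t))) t)
    (hlt : ∀ t ∈ Set.Ico (0 : ℝ) tsharp, Φ (x t) < M)
    (heq : Φ (x tsharp) = M) :
    ⟪gradient f (x tsharp), gradient Φ (x tsharp)⟫ /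
        (‖gradient f (x tsharp)‖ * ‖gradient Φ (x tsharp)‖) ≤ -ζ ∧
      ‖(‖gradient f (x tsharp)‖⁻¹ • gradient f (x tsharp))
          + (‖gradient Φ (x tsharp)‖⁻¹ • gradient Φ (x tsharp))‖
        ≤ Real.sqrt (2 * (1 - ζ)) := by
  have hts : tsharp ∈ Set.Icc (0:ℝ) tsharp := ⟨le_of_lt ht, le_refl _⟩
  set u := gradient f (x tsharp) with hu
  set v := gradient Φ (x tsharp) with hv
  have hun : (0:ℝ) < ‖u‖ := norm_pos_iff.2 (hgf tsharp hts)
  have hvn : (0:ℝ) < ‖v‖ := norm_pos_iff.2 (hgΦ tsharp hts)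
  -- Φ is differentiable at x tsharp
  have hΦdiff : DifferentiableAt ℝ Φ (x tsharp) := by
    have : Φ = fun y => -∑ i, Real.log (-(gi i y)) := funext hΦ
    rw [this]
    apply DifferentiableAt.neg
    apply DifferentiableAt.fun_sum
    intro i _
    have h1 : DifferentiableAt ℝ (gi i) (x tsharp) :=
      ((hgi i).differentiable two_ne_zero).differentiableAt
    exact (Real.differentiableAt_log (by
      have := hfeas tsharp hts i; linarith)).comp _ h1.neg
  have hgrad : HasGradientAt Φ v (x tsharp) := by
    rw [hv]; exact hΦdiff.hasGradientAt
  -- derivative of t ↦ Φ (x t) at tsharp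
  set w := (-(‖u‖⁻¹ • u) - ζ • (‖v‖⁻¹ • v)) with hw
  have hxd : HasDerivAt x w tsharp := hx tsharp hts
  have hfd : HasFDerivAt Φ ((InnerProductSpace.toDual ℝ _) v) (x tsharp) :=
    hasGradientAt_iff_hasFDerivAt.1 hgrad
  have hcomp : HasDerivAt (fun t => Φ (x t)) (⟪v, w⟫) tsharp := by
    have := hfd.comp_hasDerivAt tsharp hxd
    simpa [InnerProductSpace.toDual_apply_apply, Function.comp_def] using this
  -- the derivative is nonnegative by the max at the right endpoint
  have hmax : IsLocalMaxOn (fun t => Φ (x t)) (Set.Icc 0 tsharp) tsharp := by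
    apply IsMaxOn.localize
    intro t htmem
    simp only [Set.mem_setOf_eq, heq]
    rcases eq_or_lt_of_le htmem.2 with h | h
    · rw [h]; exact le_of_eq heq
    · exact le_of_lt (hlt t ⟨htmem.1, h⟩)
  have hcone : (0 : ℝ) - tsharp ∈ posTangentConeAt (Set.Icc (0:ℝ) tsharp) tsharp := by
    apply sub_mem_posTangentConeAt_of_segment_subset
    rw [segment_symm, segment_eq_Icc (le_of_lt ht)]
  have hnonpos : (ContinuousLinearMap.smulRight (1 : ℝ →L[ℝ] ℝ) (⟪v, w⟫)) ((0:ℝ) - tsharp) ≤ 0 :=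
    hmax.hasFDerivWithinAt_nonpos (hcomp.hasFDerivAt.hasFDerivWithinAt) hcone
  have hdnn : 0 ≤ ⟪v, w⟫ := by
    simp only [ContinuousLinearMap.smulRight_apply, ContinuousLinearMap.one_apply,
      zero_sub, smul_eq_mul] at hnonpos
    nlinarith
  -- compute ⟪v, w⟫
  have hvw : ⟪v, w⟫ = -(‖u‖⁻¹ * ⟪v, u⟫) - ζ * (‖v‖⁻¹ * (‖v‖^2)) := by
    rw [hw]
    rw [inner_sub_right, inner_neg_right, inner_smul_right, inner_smul_right,
      inner_smul_right, real_inner_self_eq_norm_sq]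
  have hsym : ⟪v, u⟫ = ⟪u, v⟫ := real_inner_comm u v
  have hkey : ⟪u, v⟫ ≤ -ζ * (‖u‖ * ‖v‖) := by
    rw [hvw, hsym] at hdnn
    have h1 : ‖v‖⁻¹ * ‖v‖^2 = ‖v‖ := by field_simp
    rw [h1] at hdnn
    have h2 : ‖u‖⁻¹ * ⟪u, v⟫ ≤ -(ζ * ‖v‖) := by linarith
    have := mul_le_mul_of_nonneg_left h2 (le_of_lt hun)
    rw [← mul_assoc, mul_inv_cancel₀ (ne_of_gt hun), one_mul] at this
    linarith [this]
  have hcos : ⟪u, v⟫ / (‖u‖ * ‖v‖) ≤ -ζ := by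
    rw [div_le_iff₀ (by positivity)]
    linarith
  refine ⟨hcos, ?_⟩
  -- second part
  have hinner : ⟪‖u‖⁻¹ • u, ‖v‖⁻¹ • v⟫ = ⟪u, v⟫ / (‖u‖ * ‖v‖) := by
    rw [inner_smul_left, inner_smul_right]
    simp [div_eq_mul_inv]
    ring
  have hnu : ‖‖u‖⁻¹ • u‖ = 1 := by
    rw [norm_smul, norm_inv, norm_norm, inv_mul_cancel₀ (ne_of_gt hun)]
  have hnv : ‖‖v‖⁻¹ • v‖ = 1 := by
    rw [norm_smul, norm_inv, norm_norm, inv_mul_cancel₀ (ne_of_gt hvn)]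
  have hsq : ‖(‖u‖⁻¹ • u) + (‖v‖⁻¹ • v)‖^2 ≤ 2 * (1 - ζ) := by
    rw [← real_inner_self_eq_norm_sq]
    rw [inner_add_add_self]
    rw [real_inner_self_eq_norm_sq, real_inner_self_eq_norm_sq, hnu, hnv, hinner,
      show (inner ℝ (‖v‖⁻¹ • v) (‖u‖⁻¹ • u) : ℝ) = inner ℝ (‖u‖⁻¹ • u) (‖v‖⁻¹ • v) from
        real_inner_comm _ _, hinner]
    nlinarith [hcos]
  calc ‖(‖u‖⁻¹ • u) + (‖v‖⁻¹ • v)‖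
      = Real.sqrt (‖(‖u‖⁻¹ • u) + (‖v‖⁻¹ • v)‖^2) := by
        rw [Real.sqrt_sq (norm_nonneg _)]
    _ ≤ Real.sqrt (2 * (1 - ζ)) := Real.sqrt_le_sqrt hsq
end

section
/- (L² bound for the gradient along the time-reparameterized Y-system.) Let ζ ∈ [0,1) and let y : [0,∞) → E satisfy y'(τ) = ‖∇f(y(τ))‖ · s_ζ(y(τ)) for all τ ≥ 0, with ∇f(y(τ)) ≠ 0 and ∇g(y(τ)) ≠ 0. Suppose there is M > 0 with f(y(τ)) ≥ f(y(0)) − M for all τ ≥ 0. Then for every T > 0, ∫₀ᵀ ‖∇f(y(τ))‖²·(1 + ζ·cos θ(y(τ))) dτ = f(y(0)) − f(y(T)) ≤ M, and consequently ∫₀^∞ ‖∇f(y(τ))‖² dτ ≤ M/(1 − ζ) < ∞. -/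
open RealInnerProductSpace

/-- L² bound for the gradient along the time-reparameterized
Y-system: for every `T > 0`,
`∫₀ᵀ ‖∇f(y)‖² (1 + ζ cos θ(y)) dτ = f(y(0)) - f(y(T)) ≤ M`, and consequently
`∫₀^∞ ‖∇f(y)‖² dτ ≤ M/(1-ζ) < ∞`. -/
theorem gdam_ysystem_l2_bound {n : ℕ}
    (f g : EuclideanSpace ℝ (Fin n) → ℝ)
    (hf : ContDiff ℝ 2 f) (hg : ContDiff ℝ 2 g)
    (ζ : ℝ) (hζ : ζ ∈ Set.Ico (0 : ℝ) 1)
    (y : ℝ → EuclideanSpace ℝ (Fin n))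
    (hgf : ∀ τ : ℝ, 0 ≤ τ → gradient f (y τ) ≠ 0)
    (hgg : ∀ τ : ℝ, 0 ≤ τ → gradient g (y τ) ≠ 0)
    (hy : ∀ τ : ℝ, 0 ≤ τ → HasDerivAt y
      (‖gradient f (y τ)‖ •
        (-(‖gradient f (y τ)‖⁻¹ • gradient f (y τ))
          - ζ • (‖gradient g (y τ)‖⁻¹ • gradient g (y τ)))) τ)
    (M : ℝ) (hM : 0 < M)
    (hbound : ∀ τ : ℝ, 0 ≤ τ → f (y 0) - M ≤ f (y τ)) :
    (∀ T : ℝ, 0 < T →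
      (∫ τ in (0 : ℝ)..T, ‖gradient f (y τ)‖ ^ 2 *
          (1 + ζ * (⟪gradient f (y τ), gradient g (y τ)⟫ /
            (‖gradient f (y τ)‖ * ‖gradient g (y τ)‖))))
        = f (y 0) - f (y T) ∧
      (∫ τ in (0 : ℝ)..T, ‖gradient f (y τ)‖ ^ 2 *
          (1 + ζ * (⟪gradient f (y τ), gradient g (y τ)⟫ /
            (‖gradient f (y τ)‖ * ‖gradient g (y τ)‖)))) ≤ M) ∧
    ∫⁻ τ in Set.Ioi (0 : ℝ), ENNReal.ofReal (‖gradient f (y τ)‖ ^ 2)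
      ≤ ENNReal.ofReal (M / (1 - ζ)) := by
  obtain ⟨hζ0, hζ1⟩ := hζ
  have h1ζ : (0:ℝ) < 1 - ζ := by linarith
  set φ : ℝ → ℝ := fun τ => ‖gradient f (y τ)‖ ^ 2 *
      (1 + ζ * (⟪gradient f (y τ), gradient g (y τ)⟫ /
        (‖gradient f (y τ)‖ * ‖gradient g (y τ)‖))) with hφdef
  -- continuity of the data
  have hyc : ContinuousOn y (Set.Ici 0) := fun τ hτ =>
    ((hy τ hτ).continuousAt).continuousWithinAt
  have hGc : Continuous (gradient f) := by
    have : gradient f = fun x =>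
        (InnerProductSpace.toDual ℝ (EuclideanSpace ℝ (Fin n))).symm (fderiv ℝ f x) := rfl
    rw [this]
    exact (LinearIsometryEquiv.continuous _).comp (hf.continuous_fderiv (by norm_num))
  have hHc : Continuous (gradient g) := by
    have : gradient g = fun x =>
        (InnerProductSpace.toDual ℝ (EuclideanSpace ℝ (Fin n))).symm (fderiv ℝ g x) := rfl
    rw [this]
    exact (LinearIsometryEquiv.continuous _).comp (hg.continuous_fderiv (by norm_num))
  have hGyc : ContinuousOn (fun τ => gradient f (y τ)) (Set.Ici 0) :=
    hGc.comp_continuousOn hyc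
  have hHyc : ContinuousOn (fun τ => gradient g (y τ)) (Set.Ici 0) :=
    hHc.comp_continuousOn hyc
  have hsqc : ContinuousOn (fun τ => ‖gradient f (y τ)‖ ^ 2) (Set.Ici 0) :=
    (hGyc.norm).pow 2
  have hφc : ContinuousOn φ (Set.Ici (0:ℝ)) := by
    apply hsqc.mul
    apply continuousOn_const.add
    apply continuousOn_const.mul
    apply (hGyc.inner hHyc).div (hGyc.norm.mul hHyc.norm)
    intro τ hτ
    exact mul_ne_zero (norm_ne_zero_iff.mpr (hgf τ hτ)) (norm_ne_zero_iff.mpr (hgg τ hτ))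
  -- derivative of f ∘ y
  have key : ∀ τ : ℝ, 0 ≤ τ → HasDerivAt (fun t => f (y t)) (-(φ τ)) τ := by
    intro τ hτ
    have hfd : HasFDerivAt f (fderiv ℝ f (y τ)) (y τ) :=
      ((hf.differentiable (by norm_num)) (y τ)).hasFDerivAt
    have hc := hfd.comp_hasDerivAt τ (hy τ hτ)
    refine hc.congr_deriv ?_
    symm
    have hinner : ∀ v, fderiv ℝ f (y τ) v = ⟪gradient f (y τ), v⟫ := fun v =>
      (InnerProductSpace.toDual_symm_apply).symm
    rw [hinner]
    have hGne : ‖gradient f (y τ)‖ ≠ 0 := norm_ne_zero_iff.mpr (hgf τ hτ)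
    have hHne : ‖gradient g (y τ)‖ ≠ 0 := norm_ne_zero_iff.mpr (hgg τ hτ)
    rw [real_inner_smul_right, inner_sub_right, inner_neg_right, real_inner_smul_right,
      real_inner_smul_right, real_inner_smul_right, real_inner_self_eq_norm_sq]
    simp only [hφdef]
    field_simp
    ring
  -- FTC
  have ftc : ∀ T : ℝ, 0 ≤ T → ∫ τ in (0:ℝ)..T, φ τ = f (y 0) - f (y T) := by
    intro T hT
    have hsub : Set.uIcc (0:ℝ) T ⊆ Set.Ici 0 := by
      rw [Set.uIcc_of_le hT]; exact Set.Icc_subset_Ici_self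
    have hint : IntervalIntegrable φ MeasureTheory.volume 0 T :=
      (hφc.mono hsub).intervalIntegrable
    have := intervalIntegral.integral_eq_sub_of_hasDerivAt
      (f := fun t => f (y t)) (f' := fun τ => -(φ τ))
      (fun t ht => key t (hsub ht).out) hint.neg
    rw [intervalIntegral.integral_neg] at this
    linarith
  -- pointwise lower bound
  have hpt : ∀ τ : ℝ, 0 ≤ τ → (1 - ζ) * ‖gradient f (y τ)‖ ^ 2 ≤ φ τ := by
    intro τ hτ
    have hGpos : (0:ℝ) < ‖gradient f (y τ)‖ := norm_pos_iff.mpr (hgf τ hτ)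
    have hHpos : (0:ℝ) < ‖gradient g (y τ)‖ := norm_pos_iff.mpr (hgg τ hτ)
    have hcs : -(‖gradient f (y τ)‖ * ‖gradient g (y τ)‖) ≤
        ⟪gradient f (y τ), gradient g (y τ)⟫ :=
      neg_le_of_abs_le (abs_real_inner_le_norm _ _)
    have hc1 : (-1:ℝ) ≤ ⟪gradient f (y τ), gradient g (y τ)⟫ /
        (‖gradient f (y τ)‖ * ‖gradient g (y τ)‖) := by
      rw [le_div_iff₀ (mul_pos hGpos hHpos)]
      linarith
    have h1 : 1 - ζ ≤ 1 + ζ * (⟪gradient f (y τ), gradient g (y τ)⟫ /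
        (‖gradient f (y τ)‖ * ‖gradient g (y τ)‖)) := by nlinarith
    have := mul_le_mul_of_nonneg_left h1 (sq_nonneg ‖gradient f (y τ)‖)
    simp only [hφdef]
    nlinarith
  constructor
  · intro T hT
    refine ⟨ftc T hT.le, ?_⟩
    rw [ftc T hT.le]
    have := hbound T hT.le
    linarith
  -- the L² bound
  · have hIoc : ∀ N : ℕ, ∫⁻ τ in Set.Ioc (0:ℝ) N, ENNReal.ofReal (‖gradient f (y τ)‖ ^ 2)
        ≤ ENNReal.ofReal (M / (1 - ζ)) := by
      intro N
      have hN : (0:ℝ) ≤ N := N.cast_nonneg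
      have hIccsub : Set.Icc (0:ℝ) N ⊆ Set.Ici 0 := Set.Icc_subset_Ici_self
      have hInt : MeasureTheory.IntegrableOn (fun τ => ‖gradient f (y τ)‖ ^ 2)
          (Set.Ioc (0:ℝ) N) := by
        exact ((hsqc.mono hIccsub).integrableOn_Icc).mono_set Set.Ioc_subset_Icc_self
      rw [← MeasureTheory.ofReal_integral_eq_lintegral_ofReal hInt
        (MeasureTheory.ae_of_all _ (fun τ => sq_nonneg _))]
      apply ENNReal.ofReal_le_ofReal
      have heq : ∫ τ in Set.Ioc (0:ℝ) N, ‖gradient f (y τ)‖ ^ 2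
          = ∫ τ in (0:ℝ)..N, ‖gradient f (y τ)‖ ^ 2 :=
        (intervalIntegral.integral_of_le hN).symm
      rw [heq]
      have hsubu : Set.uIcc (0:ℝ) N ⊆ Set.Ici 0 := by
        rw [Set.uIcc_of_le hN]; exact Set.Icc_subset_Ici_self
      have hintφ : IntervalIntegrable φ MeasureTheory.volume 0 N :=
        (hφc.mono hsubu).intervalIntegrable
      have hintsq : IntervalIntegrable (fun τ => (1 - ζ) * ‖gradient f (y τ)‖ ^ 2)
          MeasureTheory.volume 0 N :=
        ((hsqc.mono hsubu).const_smul (1 - ζ)).intervalIntegrable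
      have hmono : ∫ τ in (0:ℝ)..N, (1 - ζ) * ‖gradient f (y τ)‖ ^ 2
          ≤ ∫ τ in (0:ℝ)..N, φ τ := by
        apply intervalIntegral.integral_mono_on hN hintsq hintφ
        intro τ hτ
        exact hpt τ hτ.1
      rw [intervalIntegral.integral_const_mul] at hmono
      have hφM : ∫ τ in (0:ℝ)..N, φ τ ≤ M := by
        rw [ftc N hN]
        have := hbound N hN
        linarith
      rw [le_div_iff₀ h1ζ]
      calc (∫ τ in (0:ℝ)..N, ‖gradient f (y τ)‖ ^ 2) * (1 - ζ)
          = (1 - ζ) * ∫ τ in (0:ℝ)..N, ‖gradient f (y τ)‖ ^ 2 := by ring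
        _ ≤ ∫ τ in (0:ℝ)..N, φ τ := hmono
        _ ≤ M := hφM
    -- monotone convergence
    set G : ℝ → ENNReal := fun τ => ENNReal.ofReal (‖gradient f (y τ)‖ ^ 2) with hGdef
    have hmeas : AEMeasurable G (MeasureTheory.volume.restrict (Set.Ioi (0:ℝ))) := by
      exact ((hsqc.mono Set.Ioi_subset_Ici_self).aemeasurable
        measurableSet_Ioi).ennreal_ofReal
    have hsup : ∀ τ : ℝ, (⨆ N : ℕ, Set.indicator (Set.Iic (N:ℝ)) G τ) = G τ := by
      intro τ
      obtain ⟨N, hN⟩ := exists_nat_ge τ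
      refine le_antisymm (iSup_le fun N => Set.indicator_le_self _ _ τ) ?_
      exact le_iSup_of_le N (le_of_eq (Set.indicator_of_mem (Set.mem_Iic.mpr hN) G).symm)
    have hmono : ∀ τ : ℝ, Monotone fun N : ℕ => Set.indicator (Set.Iic (N:ℝ)) G τ := by
      intro τ a b hab
      exact Set.indicator_le_indicator_of_subset
        (Set.Iic_subset_Iic.mpr (Nat.cast_le.mpr hab)) (fun _ => zero_le) τ
    calc ∫⁻ τ in Set.Ioi (0:ℝ), G τ
        = ∫⁻ τ in Set.Ioi (0:ℝ), ⨆ N : ℕ, Set.indicator (Set.Iic (N:ℝ)) G τ := by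
          simp_rw [hsup]
      _ = ⨆ N : ℕ, ∫⁻ τ in Set.Ioi (0:ℝ), Set.indicator (Set.Iic (N:ℝ)) G τ := by
          exact MeasureTheory.lintegral_iSup'
            (fun N => hmeas.indicator measurableSet_Iic)
            (MeasureTheory.ae_of_all _ hmono)
      _ ≤ ENNReal.ofReal (M / (1 - ζ)) := by
          apply iSup_le
          intro N
          rw [MeasureTheory.lintegral_indicator measurableSet_Iic G,
            MeasureTheory.Measure.restrict_restrict measurableSet_Iic,
            Set.inter_comm, Set.Ioi_inter_Iic]
          exact hIoc N
end

section
/- (Global convergence to critical points, gradient-vanishing form of the main theorem.) Let ζ ∈ [0,1) and let y : [0,∞) → E satisfy the Y-system y'(τ) = ‖∇f(y(τ))‖ · s_ζ(y(τ)) for all τ ≥ 0, with ∇f(y(τ)) ≠ 0 and ∇g(y(τ)) ≠ 0 along the trajectory. Suppose (i) there is M > 0 with f(y(τ)) ≥ f(y(0)) − M for all τ ≥ 0, and (ii) the function τ ↦ ‖∇f(y(τ))‖ is Lipschitz continuous on [0,∞) with some constant l > 0. Then lim_{τ→∞} ‖∇f(y(τ))‖ = 0, i.e. the trajectory approaches the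 set of critical points of the objective function f. -/
open RealInnerProductSpace Filter

/-- Global convergence to critical points: along the Y-system,
if `f` is bounded below along the trajectory and `τ ↦ ‖∇f(y(τ))‖` is Lipschitz,
then `‖∇f(y(τ))‖ → 0` as `τ → ∞`. -/
theorem gdam_global_convergence {n : ℕ}
    (f g : EuclideanSpace ℝ (Fin n) → ℝ)
    (hf : ContDiff ℝ 2 f) (hg : ContDiff ℝ 2 g)
    (ζ : ℝ) (hζ : ζ ∈ Set.Ico (0 : ℝ) 1)
    (y : ℝ → EuclideanSpace ℝ (Fin n))
    (hgf : ∀ τ : ℝ, 0 ≤ τ → gradient f (y τ) ≠ 0)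
    (hgg : ∀ τ : ℝ, 0 ≤ τ → gradient g (y τ) ≠ 0)
    (hy : ∀ τ : ℝ, 0 ≤ τ → HasDerivAt y
      (‖gradient f (y τ)‖ •
        (-(‖gradient f (y τ)‖⁻¹ • gradient f (y τ))
          - ζ • (‖gradient g (y τ)‖⁻¹ • gradient g (y τ)))) τ)
    (M : ℝ) (hM : 0 < M)
    (hbound : ∀ τ : ℝ, 0 ≤ τ → f (y 0) - M ≤ f (y τ))
    (l : ℝ) (hl : 0 < l)
    (hlip : ∀ τ' τ'' : ℝ, 0 ≤ τ' → 0 ≤ τ'' →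
      |‖gradient f (y τ')‖ - ‖gradient f (y τ'')‖| ≤ l * |τ' - τ''|) :
    Tendsto (fun τ => ‖gradient f (y τ)‖) atTop (nhds 0) := by
  obtain ⟨hζ0, hζ1⟩ := hζ
  set h : ℝ → ℝ := fun τ => ‖gradient f (y τ)‖ with hhdef
  -- continuity of gradients
  have cgf : Continuous (gradient f) := by
    have hc := hf.continuous_fderiv (by norm_num)
    exact (InnerProductSpace.toDual ℝ _).symm.continuous.comp hc
  have cgg : Continuous (gradient g) := by
    have hc := hg.continuous_fderiv (by norm_num)
    exact (InnerProductSpace.toDual ℝ _).symm.continuous.comp hc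
  have yca : ∀ τ : ℝ, 0 ≤ τ → ContinuousAt y τ := fun τ hτ => (hy τ hτ).continuousAt
  -- the derivative of f ∘ y
  set D : ℝ → ℝ := fun τ => ⟪gradient f (y τ),
      (‖gradient f (y τ)‖ •
        (-(‖gradient f (y τ)‖⁻¹ • gradient f (y τ))
          - ζ • (‖gradient g (y τ)‖⁻¹ • gradient g (y τ))))⟫ with hDdef
  have hder : ∀ τ : ℝ, 0 ≤ τ → HasDerivAt (fun t => f (y t)) (D τ) τ := by
    intro τ hτ
    have hgrad : HasGradientAt f (gradient f (y τ)) (y τ) :=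
      ((hf.differentiable (by norm_num)) (y τ)).hasGradientAt
    exact hgrad.hasFDerivAt.comp_hasDerivAt τ (hy τ hτ)
  have hDle : ∀ τ : ℝ, 0 ≤ τ → D τ ≤ -(1 - ζ) * h τ ^ 2 := by
    intro τ hτ
    set a := gradient f (y τ)
    set b := gradient g (y τ)
    have hna : ‖a‖ ≠ 0 := norm_ne_zero_iff.2 (hgf τ hτ)
    have hnb : ‖b‖ ≠ 0 := norm_ne_zero_iff.2 (hgg τ hτ)
    have hD : D τ = -‖a‖ ^ 2 - ζ * (‖a‖ * (‖b‖⁻¹ * ⟪a, b⟫)) := by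
      simp only [hDdef, inner_smul_right, inner_sub_right, inner_neg_right,
        real_inner_smul_right, real_inner_self_eq_norm_sq]
      rw [show gradient f (y τ) = a from rfl, show gradient g (y τ) = b from rfl]
      field_simp <;> ring
    have hcs : |⟪a, b⟫| ≤ ‖a‖ * ‖b‖ := abs_real_inner_le_norm a b
    have hib := abs_le.1 hcs
    have hnb' : 0 < ‖b‖ := lt_of_le_of_ne (norm_nonneg _) (Ne.symm hnb)
    have h1 : -‖a‖ ≤ ‖b‖⁻¹ * ⟪a, b⟫ := by
      rw [inv_mul_eq_div]
      exact (le_div_iff₀ hnb').2 (by nlinarith [hib.1])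
    have key : -(‖a‖ ^ 2) ≤ ‖a‖ * (‖b‖⁻¹ * ⟪a, b⟫) := by
      nlinarith [norm_nonneg a]
    rw [hD]
    show _ ≤ -(1 - ζ) * ‖a‖ ^ 2
    nlinarith [hζ0, key]
  -- continuity facts
  have hDcont : ∀ τ : ℝ, 0 ≤ τ → ContinuousAt D τ := by
    intro τ hτ
    have c1 : ContinuousAt (fun t => gradient f (y t)) τ :=
      cgf.continuousAt.comp (yca τ hτ)
    have c2 : ContinuousAt (fun t => gradient g (y t)) τ :=
      cgg.continuousAt.comp (yca τ hτ)
    have cn1 : ContinuousAt (fun t => ‖gradient f (y t)‖) τ := c1.norm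
    have cn2 : ContinuousAt (fun t => ‖gradient g (y t)‖) τ := c2.norm
    have ci1 : ContinuousAt (fun t => ‖gradient f (y t)‖⁻¹) τ :=
      cn1.inv₀ (norm_ne_zero_iff.2 (hgf τ hτ))
    have ci2 : ContinuousAt (fun t => ‖gradient g (y t)‖⁻¹) τ :=
      cn2.inv₀ (norm_ne_zero_iff.2 (hgg τ hτ))
    exact c1.inner (cn1.smul (((ci1.smul c1).neg).sub
      ((continuousAt_const : ContinuousAt (fun _ : ℝ => ζ) τ).smul (ci2.smul c2))))
  have hhcont : ContinuousOn h (Set.Ici (0 : ℝ)) := fun t ht =>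
    ((cgf.continuousAt.comp (yca t ht)).norm).continuousWithinAt
  have hint : ∀ p q : ℝ, 0 ≤ p → 0 ≤ q →
      IntervalIntegrable (fun t => h t ^ 2) MeasureTheory.volume p q := by
    intro p q hp hq
    apply ContinuousOn.intervalIntegrable
    apply ContinuousOn.pow
    apply hhcont.mono
    intro t ht
    exact le_trans (le_inf hp hq) ht.1
  -- bound on the integral of h^2
  have hFbound : ∀ T : ℝ, 0 ≤ T → ∫ t in (0:ℝ)..T, h t ^ 2 ≤ M / (1 - ζ) := by
    intro T hT
    have hDint : IntervalIntegrable D MeasureTheory.volume 0 T := by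
      apply ContinuousOn.intervalIntegrable
      intro t ht
      rw [Set.uIcc_of_le hT] at ht
      exact (hDcont t ht.1).continuousWithinAt
    have ftc : ∫ t in (0:ℝ)..T, D t = f (y T) - f (y 0) := by
      apply intervalIntegral.integral_eq_sub_of_hasDerivAt _ hDint
      intro t ht
      rw [Set.uIcc_of_le hT] at ht
      exact hder t ht.1
    have h2int := hint 0 T le_rfl hT
    have hmono : ∫ t in (0:ℝ)..T, (1 - ζ) * h t ^ 2 ≤ ∫ t in (0:ℝ)..T, -D t := by
      apply intervalIntegral.integral_mono_on hT (h2int.const_mul _) hDint.neg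
      intro t ht
      have := hDle t ht.1
      show (1 - ζ) * h t ^ 2 ≤ -(D t)
      linarith
    rw [intervalIntegral.integral_neg, ftc, intervalIntegral.integral_const_mul] at hmono
    have hb := hbound T hT
    rw [le_div_iff₀ (by linarith : (0:ℝ) < 1 - ζ), mul_comm]
    linarith
  -- Barbalat-type argument
  rw [Metric.tendsto_atTop]
  by_contra hcon
  push_neg at hcon
  obtain ⟨ε, hε, hcon⟩ := hcon
  set δ := ε / (2 * l) with hδdef
  have hδ : 0 < δ := by positivity
  have pick : ∀ N : ℝ, ∃ τ, N ≤ τ ∧ ε ≤ h τ := by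
    intro N
    obtain ⟨τ, hτN, hτε⟩ := hcon N
    refine ⟨τ, hτN, ?_⟩
    rwa [Real.dist_eq, sub_zero, abs_of_nonneg (norm_nonneg _)] at hτε
  choose pt hpt1 hpt2 using pick
  set a : ℕ → ℝ := fun k => Nat.rec (pt δ) (fun _ prev => pt (prev + 2 * δ)) k with hadef
  have haS : ∀ k, a k + 2 * δ ≤ a (k + 1) := fun k => hpt1 _
  have haε : ∀ k, ε ≤ h (a k) := by
    intro k
    cases k with
    | zero => exact hpt2 _
    | succ m => exact hpt2 _
  have haδ : ∀ k, δ ≤ a k := by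
    intro k
    induction k with
    | zero => exact hpt1 δ
    | succ m ih => have := haS m; linarith
  -- pointwise lower bound near each a k
  have hlow : ∀ k, ∀ t ∈ Set.Icc (a k - δ) (a k + δ), ε / 2 ≤ h t := by
    intro k t ht
    have h0t : 0 ≤ t := by have := haδ k; have := ht.1; linarith
    have h0a : 0 ≤ a k := le_trans hδ.le (haδ k)
    have hl1 := hlip t (a k) h0t h0a
    have habs : |t - a k| ≤ δ := abs_le.2 ⟨by linarith [ht.1], by linarith [ht.2]⟩
    have : |h t - h (a k)| ≤ l * δ :=
      le_trans hl1 (by nlinarith)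
    have hld : l * δ = ε / 2 := by
      rw [hδdef]; field_simp
    rw [hld] at this
    have habs2 := abs_le.1 this
    have hε2 := haε k
    linarith [habs2.1]
  -- integral over each bump
  have hseg : ∀ k, ε ^ 2 / 4 * (2 * δ) ≤ ∫ t in (a k - δ)..(a k + δ), h t ^ 2 := by
    intro k
    have h0 : (0:ℝ) ≤ a k - δ := by have := haδ k; linarith
    have h1 : (0:ℝ) ≤ a k + δ := by linarith
    have hle : a k - δ ≤ a k + δ := by linarith
    have := intervalIntegral.integral_mono_on (f := fun _ => ε ^ 2 / 4)
      (g := fun t => h t ^ 2) hle (intervalIntegrable_const) (hint _ _ h0 h1)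
      (fun t ht => by nlinarith [hlow k t ht, hε])
    rw [intervalIntegral.integral_const, smul_eq_mul] at this
    have heq : a k + δ - (a k - δ) = 2 * δ := by ring
    rw [heq] at this
    linarith
  -- accumulate
  have hacc : ∀ k : ℕ, (k + 1 : ℝ) * (ε ^ 2 / 4 * (2 * δ)) ≤
      ∫ t in (0:ℝ)..(a k + δ), h t ^ 2 := by
    intro k
    induction k with
    | zero =>
      have h0 : (0:ℝ) ≤ a 0 - δ := by have := haδ 0; linarith
      have hsplit := intervalIntegral.integral_add_adjacent_intervals
        (hint 0 (a 0 - δ) le_rfl h0) (hint (a 0 - δ) (a 0 + δ) h0 (by linarith))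
      have hn : (0:ℝ) ≤ ∫ t in (0:ℝ)..(a 0 - δ), h t ^ 2 :=
        intervalIntegral.integral_nonneg h0 (fun t _ => sq_nonneg _)
      have := hseg 0
      push_cast
      linarith [hsplit ▸ (by linarith : ε ^ 2 / 4 * (2 * δ) ≤
        (∫ t in (0:ℝ)..(a 0 - δ), h t ^ 2) + ∫ t in (a 0 - δ)..(a 0 + δ), h t ^ 2)]
    | succ m ih =>
      have h0m : (0:ℝ) ≤ a m + δ := by have := haδ m; linarith
      have h1 : a m + δ ≤ a (m+1) - δ := by have := haS m; linarith
      have h0m1 : (0:ℝ) ≤ a (m+1) - δ := le_trans h0m h1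
      have hs1 := intervalIntegral.integral_add_adjacent_intervals
        (hint 0 (a m + δ) le_rfl h0m) (hint (a m + δ) (a (m+1) - δ) h0m h0m1)
      have hs2 := intervalIntegral.integral_add_adjacent_intervals
        ((hint 0 (a m + δ) le_rfl h0m).trans (hint (a m + δ) (a (m+1) - δ) h0m h0m1))
        (hint (a (m+1) - δ) (a (m+1) + δ) h0m1 (by linarith))
      have hn : (0:ℝ) ≤ ∫ t in (a m + δ)..(a (m+1) - δ), h t ^ 2 :=
        intervalIntegral.integral_nonneg h1 (fun t _ => sq_nonneg _)
      have hsm := hseg (m+1)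
      push_cast
      push_cast at ih
      rw [← hs2, ← hs1]
      linarith
  -- contradiction
  set c := ε ^ 2 / 4 * (2 * δ) with hcdef
  have hc : 0 < c := by positivity
  obtain ⟨k, hk⟩ := exists_nat_gt (M / (1 - ζ) / c)
  have h1 := hacc k
  have h2 := hFbound (a k + δ) (by have := haδ k; linarith)
  have h3 : M / (1 - ζ) < (k : ℝ) * c := by
    rw [div_lt_iff₀ hc] at hk
    exact hk
  nlinarith [hc]
end

section
/- (Equivalence of the MSDM search direction and the GDAM direction.) Let a and b be unit vectors in a real inner product space with c₀ = ⟪a, b⟫ satisfying −1 < c₀ < 1, and let v₁ = (−a + b)/√(2 − 2c₀), v₂ = (−a − b)/√(2 + 2c₀). Then for every c ≥ 1, the MSDM search direction s_c = √((1 − c₀)/2)·v₁ + c·√((1 + c₀)/2)·v₂ satisfies s_c = −a − ((c − 1)/2)·(a + b) = ((c + 1)/2)·(−a − ζ·b), where ζ = (c − 1)/(c + 1) ∈ [0, 1). In particular s_c is a positive scalar multiple of the GDAM direction −a − ζ·b. -/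
open RealInnerProductSpace

/-- Equivalence of the MSDM search direction and the GDAM
direction: for unit vectors `a`, `b` with `c₀ = ⟪a,b⟫ ∈ (-1,1)` and `c ≥ 1`,
the MSDM direction `s_c = √((1-c₀)/2)·v₁ + c·√((1+c₀)/2)·v₂` equals
`-a - ((c-1)/2)·(a+b) = ((c+1)/2)·(-a - ζ·b)` with `ζ = (c-1)/(c+1) ∈ [0,1)`. -/
theorem msdm_eq_gdam {E : Type*}
    [NormedAddCommGroup E] [InnerProductSpace ℝ E]
    (a b : E) (ha : ‖a‖ = 1) (hb : ‖b‖ = 1)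
    (c₀ : ℝ) (hc₀ : c₀ = ⟪a, b⟫) (hc1 : -1 < c₀) (hc2 : c₀ < 1)
    (c : ℝ) (hc : 1 ≤ c) :
    Real.sqrt ((1 - c₀) / 2) • ((Real.sqrt (2 - 2 * c₀))⁻¹ • (-a + b))
        + (c * Real.sqrt ((1 + c₀) / 2)) •
          ((Real.sqrt (2 + 2 * c₀))⁻¹ • (-a - b))
      = -a - ((c - 1) / 2) • (a + b) ∧
    -a - ((c - 1) / 2) • (a + b)
      = ((c + 1) / 2) • (-a - ((c - 1) / (c + 1)) • b) ∧
    (c - 1) / (c + 1) ∈ Set.Ico (0 : ℝ) 1 := by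
  have hm : (0:ℝ) < (1 - c₀) / 2 := by linarith
  have hp : (0:ℝ) < (1 + c₀) / 2 := by linarith
  have hsm : Real.sqrt ((1 - c₀) / 2) > 0 := Real.sqrt_pos.mpr hm
  have hsp : Real.sqrt ((1 + c₀) / 2) > 0 := Real.sqrt_pos.mpr hp
  have e1 : (2 - 2 * c₀) = 2^2 * ((1 - c₀) / 2) := by ring
  have e2 : (2 + 2 * c₀) = 2^2 * ((1 + c₀) / 2) := by ring
  have h1 : Real.sqrt ((1 - c₀) / 2) * (Real.sqrt (2 - 2 * c₀))⁻¹ = 1 / 2 := by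
    have hs : Real.sqrt (1 - c₀) > 0 := Real.sqrt_pos.mpr (by linarith)
    rw [e1, Real.sqrt_mul (by positivity), Real.sqrt_sq (by norm_num)]
    field_simp
  have h2 : Real.sqrt ((1 + c₀) / 2) * (Real.sqrt (2 + 2 * c₀))⁻¹ = 1 / 2 := by
    have hs : Real.sqrt (1 + c₀) > 0 := Real.sqrt_pos.mpr (by linarith)
    rw [e2, Real.sqrt_mul (by positivity), Real.sqrt_sq (by norm_num)]
    field_simp
  refine ⟨?_, ?_, ?_⟩
  · rw [smul_smul, smul_smul, h1, mul_assoc, h2]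
    match_scalars <;> ring
  · have hcp : c + 1 ≠ 0 := by positivity
    match_scalars <;> field_simp <;> ring
  · exact ⟨div_nonneg (by linarith) (by linarith), by rw [div_lt_one (by positivity)]; linarith⟩
end
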